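/- Fix n ∈ ℕ and q,a,c ∈ ℂ with q ≠ 0, q^j ≠ 1, a·q^j ≠ 1 and c·q^j ≠ 1 for 1 ≤ j ≤ n. Define the big q-Laguerre polynomial P_n(x) := Σ_{k=0}^{n} [(q^{−n};q)_k·(x;q)_k / ((q;q)_k·(a q;q)_k·(c q;q)_k)]·q^k. Then P_n is an eigenfunction, with eigenvalue q^{−n}, of the operator K₀ of the basic representation of the confluent Zhedanov algebra Z_IV (written here in the rescaled variable, i.e. the paper's identity K₀P_n[λx] = q^{−n}P_n[λx]): for every x ∈ ℂ∖{0}, [q·(c x + a·(x − c·(1+q−x)))/x²]·P_n(x) + [(x−q a)(x−q c)/x²]·P_n(x/q) − [q·(x−1)·a c/x²]·P_n(q x) = q^{−n}·P_n(x). -/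

import Mathlib

open Finset

/-- The q-Pochhammer symbol `(z; q)_k`. -/
noncomputable def qPoch (z q : ℂ) (k : ℕ) : ℂ := ∏ j ∈ Finset.range k, (1 - z * q ^ j)

lemma qPoch_succ (z q : ℂ) (k : ℕ) : qPoch z q (k+1) = qPoch z q k * (1 - z * q ^ k) :=
  Finset.prod_range_succ _ _

lemma qPoch_succ' (z q : ℂ) (k : ℕ) : qPoch z q (k+1) = (1 - z) * qPoch (z*q) q k := by
  rw [qPoch, Finset.prod_range_succ']
  simp only [pow_zero, mul_one, qPoch]
  rw [mul_comm]
  congr 1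
  apply Finset.prod_congr rfl
  intro j _
  ring_nf

/-- The big q-Laguerre polynomials are eigenfunctions, with eigenvalue `q⁻ⁿ`,
of the operator `K₀` of the basic representation of the confluent Zhedanov
algebra `Z_IV` (in the rescaled variable). -/
theorem bigQLaguerre_eigenfunction (n : ℕ) (q a c : ℂ) (hq : q ≠ 0)
    (hqj : ∀ j : ℕ, 1 ≤ j → j ≤ n → q ^ j ≠ 1)
    (haj : ∀ j : ℕ, 1 ≤ j → j ≤ n → a * q ^ j ≠ 1)
    (hcj : ∀ j : ℕ, 1 ≤ j → j ≤ n → c * q ^ j ≠ 1)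
    (P : ℂ → ℂ)
    (hP : ∀ x : ℂ, P x = ∑ k ∈ Finset.range (n + 1),
        qPoch (q ^ n)⁻¹ q k * qPoch x q k
          / (qPoch q q k * qPoch (a * q) q k * qPoch (c * q) q k) * q ^ k) :
    ∀ x : ℂ, x ≠ 0 →
      q * (c * x + a * (x - c * (1 + q - x))) / x ^ 2 * P x
        + (x - q * a) * (x - q * c) / x ^ 2 * P (x / q)
        - q * (x - 1) * a * c / x ^ 2 * P (q * x)
        = (q ^ n)⁻¹ * P x := by
  intro x hx
  have hqn : (q:ℂ)^n ≠ 0 := pow_ne_zero n hq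
  set g : ℕ → ℂ := fun k => if k = 0 then 0 else
    qPoch ((q:ℂ)^n)⁻¹ q k * qPoch x q (k-1)
      / (qPoch q q (k-1) * qPoch (a*q) q (k-1) * qPoch (c*q) q (k-1)) with hg
  rw [hP x, hP (x/q), hP (q*x), ← sub_eq_zero, Finset.mul_sum, Finset.mul_sum,
    Finset.mul_sum, Finset.mul_sum, ← Finset.sum_add_distrib, ← Finset.sum_sub_distrib,
    ← Finset.sum_sub_distrib]
  have tele : ∑ k ∈ Finset.range (n+1), (g (k+1) - g k) = 0 := by
    rw [Finset.sum_range_sub]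
    have h1 : g (n+1) = 0 := by
      have hz : qPoch ((q:ℂ)^n)⁻¹ q (n+1) = 0 := by
        apply Finset.prod_eq_zero (Finset.self_mem_range_succ n)
        rw [inv_mul_cancel₀ hqn]; ring
      simp [hg, hz]
    have h0 : g 0 = 0 := by simp [hg]
    rw [h1, h0, sub_zero]
  refine Eq.trans (Finset.sum_congr rfl fun k hk => ?_) tele
  simp only [Finset.mem_range] at hk
  match k with
  | 0 => simp [hg, qPoch]; field_simp; ring
  | (m+1) =>
    have hmn : m + 1 ≤ n := by omega
    have h1 : (1:ℂ) - q * q ^ m ≠ 0 := by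
      have := hqj (m+1) (by omega) hmn
      rw [pow_succ, mul_comm] at this
      exact sub_ne_zero_of_ne (Ne.symm this)
    have h2 : (1:ℂ) - a * q * q ^ m ≠ 0 := by
      have := haj (m+1) (by omega) hmn
      rw [pow_succ, ← mul_assoc, mul_comm _ q, ← mul_assoc, mul_comm q _] at this
      exact sub_ne_zero_of_ne (Ne.symm this)
    have h3 : (1:ℂ) - c * q * q ^ m ≠ 0 := by
      have := hcj (m+1) (by omega) hmn
      rw [pow_succ, ← mul_assoc, mul_comm _ q, ← mul_assoc, mul_comm q _] at this
      exact sub_ne_zero_of_ne (Ne.symm this)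
    have hDq : qPoch q q m ≠ 0 := by
      rw [qPoch, Finset.prod_ne_zero_iff]
      intro j hj
      have := hqj (j+1) (by omega) (by simp at hj; omega)
      rw [pow_succ, mul_comm] at this
      exact sub_ne_zero_of_ne (Ne.symm this)
    have hDa : qPoch (a*q) q m ≠ 0 := by
      rw [qPoch, Finset.prod_ne_zero_iff]
      intro j hj
      have := haj (j+1) (by omega) (by simp at hj; omega)
      rw [pow_succ, ← mul_assoc, mul_comm _ q, ← mul_assoc, mul_comm q _] at this
      exact sub_ne_zero_of_ne (Ne.symm this)
    have hDc : qPoch (c*q) q m ≠ 0 := by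
      rw [qPoch, Finset.prod_ne_zero_iff]
      intro j hj
      have := hcj (j+1) (by omega) (by simp at hj; omega)
      rw [pow_succ, ← mul_assoc, mul_comm _ q, ← mul_assoc, mul_comm q _] at this
      exact sub_ne_zero_of_ne (Ne.symm this)
    have hw : qPoch (x/q) q (m+1) = (1 - x/q) * qPoch x q m := by
      rw [qPoch_succ', div_mul_cancel₀ x hq]
    set G := qPoch (q*x) q (m+1) with hGdef
    have hG : (1-x) * G = qPoch x q m * (1 - x*q^m) * (1 - x*(q^m*q)) := by
      rw [hGdef, mul_comm q x, ← qPoch_succ', qPoch_succ, qPoch_succ, pow_succ]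
    rw [hw]
    simp only [hg, if_neg (Nat.succ_ne_zero _), Nat.add_sub_cancel]
    simp only [qPoch_succ, pow_succ q m]
    set u := qPoch x q m
    set Nm := qPoch ((q:ℂ)^n)⁻¹ q m
    set D1 := qPoch q q m
    set D2 := qPoch (a*q) q m
    set D3 := qPoch (c*q) q m
    set QM := (q:ℂ)^m with hQM
    set NI := ((q:ℂ)^n)⁻¹ with hNI
    clear hQM hNI
    clear_value u Nm D1 D2 D3 QM NI G
    clear hP hg hw hGdef tele hqn
    have hGel : q * (x - 1) * a * c / x ^ 2 *
          (Nm * (1 - NI * QM) * G / (D1 * (1 - q * QM) * (D2 * (1 - a * q * QM)) * (D3 * (1 - c * q * QM))) *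
            (QM * q))
        = -(q * a * c / x ^ 2 *
          (Nm * (1 - NI * QM) / (D1 * (1 - q * QM) * (D2 * (1 - a * q * QM)) * (D3 * (1 - c * q * QM))) *
            (QM * q)) * ((1 - x) * G)) := by ring
    rw [hGel, hG]
    have hx2 : (x:ℂ)^2 ≠ 0 := pow_ne_zero _ hx
    have hDD : D1 * (1 - q * QM) * (D2 * (1 - a * q * QM)) * (D3 * (1 - c * q * QM)) ≠ 0 :=
      mul_ne_zero (mul_ne_zero (mul_ne_zero hDq h1) (mul_ne_zero hDa h2)) (mul_ne_zero hDc h3)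
    have hD0 : D1 * D2 * D3 ≠ 0 := mul_ne_zero (mul_ne_zero hDq hDa) hDc
    set DD := D1 * (1 - q * QM) * (D2 * (1 - a * q * QM)) * (D3 * (1 - c * q * QM)) with hDDdef
    have hDEN : x^2 * DD * (q * (D1*D2*D3)) ≠ 0 :=
      mul_ne_zero (mul_ne_zero hx2 hDD) (mul_ne_zero hq hD0)
    rw [sub_neg_eq_add]
    have e1 : q * (c * x + a * (x - c * (1 + q - x))) / x ^ 2 *
          (Nm * (1 - NI * QM) * (u * (1 - x * QM)) / DD * (QM * q))
        = q * (c * x + a * (x - c * (1 + q - x))) * (Nm * (1 - NI * QM) * (u * (1 - x * QM)))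
            * (QM * q) * (q * (D1*D2*D3)) / (x^2 * DD * (q * (D1*D2*D3))) := by
      rw [eq_div_iff hDEN]; field_simp
    have e2 : (x - q * a) * (x - q * c) / x ^ 2 *
          (Nm * (1 - NI * QM) * ((1 - x / q) * u) / DD * (QM * q))
        = (x - q * a) * (x - q * c) * (Nm * (1 - NI * QM) * ((q - x) * u)) * (QM * q)
            * (D1*D2*D3) / (x^2 * DD * (q * (D1*D2*D3))) := by
      rw [eq_div_iff hDEN]; field_simp
    have e3 : q * a * c / x ^ 2 * (Nm * (1 - NI * QM) / DD * (QM * q))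
            * (u * (1 - x * QM) * (1 - x * (QM * q)))
        = q * a * c * (Nm * (1 - NI * QM)) * (QM * q) * (u * (1 - x * QM) * (1 - x * (QM * q)))
            * (q * (D1*D2*D3)) / (x^2 * DD * (q * (D1*D2*D3))) := by
      rw [eq_div_iff hDEN]; field_simp
    have e4 : NI * (Nm * (1 - NI * QM) * (u * (1 - x * QM)) / DD * (QM * q))
        = NI * (Nm * (1 - NI * QM) * (u * (1 - x * QM))) * (QM * q) * (x^2 * q * (D1*D2*D3))
            / (x^2 * DD * (q * (D1*D2*D3))) := by
      rw [eq_div_iff hDEN]; field_simp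
    have e5 : Nm * (1 - NI * QM) * (1 - NI * (QM * q)) * (u * (1 - x * QM)) / DD
        = Nm * (1 - NI * QM) * (1 - NI * (QM * q)) * (u * (1 - x * QM)) * (x^2 * q * (D1*D2*D3))
            / (x^2 * DD * (q * (D1*D2*D3))) := by
      rw [eq_div_iff hDEN]; field_simp
    have e6 : Nm * (1 - NI * QM) * u / (D1 * D2 * D3)
        = Nm * (1 - NI * QM) * u * (x^2 * DD * q) / (x^2 * DD * (q * (D1*D2*D3))) := by
      rw [eq_div_iff hDEN]; field_simp
    rw [e1, e2, e3, e4, e5, e6, ← add_div, ← add_div, ← sub_div,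
      ← sub_div]
    congr 1
    rw [hDDdef]
    ring
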